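/- Let A be a semigeneric tournament with k parts A₁,…,A_k. The following are equivalent: (a) A is saturated (the canonical equivalence ∼ has exactly k·2^{k-1} classes); (b) for every i, every choice of vertices v_j ∈ A_j for j ≠ i, and every function f : {1,…,k}\{i} → {0,1}, there is a vertex v ∈ A_i such that for each j ≠ i the edge between v and v_j is oriented from v to v_j iff f(j) = 0. -/
import Mathlib

noncomputable def eInd (p : Prop) : ℕ := @ite ℕ p (Classical.propDecidable p) 1 0

structure Semigeneric (V : Type*) (P : Type*) where
  part : V → P
  E : V → V → Prop
  not_edge_same : ∀ u v, part u = part v → ¬ E u v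
  total : ∀ u v, part u ≠ part v → E u v ∨ E v u
  asymm : ∀ u v, E u v → ¬ E v u
  even : ∀ a b c d, a ≠ b → c ≠ d → part a = part b → part c = part d →
    part a ≠ part c →
    Even (eInd (E a c) + eInd (E a d) + eInd (E b c) + eInd (E b d))

def canSim {V P : Type*} (T : Semigeneric V P) (x y : V) : Prop :=
  T.part x = T.part y ∧ ∀ w, T.part w ≠ T.part x → (T.E x w ↔ T.E y w)

lemma eInd_le_one (p : Prop) : eInd p ≤ 1 := by
  unfold eInd; split <;> simp

lemma eInd_eq_iff {p q : Prop} : eInd p = eInd q ↔ (p ↔ q) := by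
  unfold eInd; split <;> split <;> simp_all

section
variable {V : Type*} {k : ℕ} (T : Semigeneric V (Fin k))

lemma transfer_one {x y w w' : V} (hxy : T.part x = T.part y)
    (hww : T.part w = T.part w') (hne : T.part w ≠ T.part x)
    (h : T.E x w ↔ T.E y w) : T.E x w' ↔ T.E y w' := by
  by_cases hxy' : x = y
  · subst hxy'; exact Iff.rfl
  by_cases hww' : w = w'
  · subst hww'; exact h
  have he := T.even x y w w' hxy' hww' hxy hww (fun hc => hne hc.symm)
  have h1 : eInd (T.E x w) = eInd (T.E y w) := eInd_eq_iff.2 h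
  have l2 := eInd_le_one (T.E x w')
  have l4 := eInd_le_one (T.E y w')
  refine eInd_eq_iff.1 ?_
  obtain ⟨m, hm⟩ := he
  omega

lemma transfer {x y w w' : V} (hxy : T.part x = T.part y)
    (hww : T.part w = T.part w') (hne : T.part w ≠ T.part x) :
    (T.E x w ↔ T.E y w) ↔ (T.E x w' ↔ T.E y w') :=
  ⟨transfer_one T hxy hww hne,
   transfer_one T hxy hww.symm (hww ▸ hne)⟩

noncomputable def pat (r : Fin k → V) (x : V) : Fin k → Bool :=
  fun j => @decide (T.part x ≠ j ∧ T.E x (r j)) (Classical.propDecidable _)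

lemma pat_self (r : Fin k → V) (x : V) : pat T r x (T.part x) = false := by
  simp [pat]

lemma pat_eq_iff (r : Fin k → V) {x y : V} (hp : T.part x = T.part y) :
    pat T r x = pat T r y ↔ ∀ j, j ≠ T.part x → (T.E x (r j) ↔ T.E y (r j)) := by
  constructor
  · intro h j hj
    have := congrFun h j
    rw [pat, pat, decide_eq_decide] at this
    have h1 : T.part x ≠ j := fun hc => hj hc.symm
    have h2 : T.part y ≠ j := hp ▸ h1
    constructor
    · intro he; exact (this.1 ⟨h1, he⟩).2
    · intro he; exact (this.2 ⟨h2, he⟩).2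
  · intro h
    funext j
    rw [pat, pat, decide_eq_decide]
    by_cases hj : j = T.part x
    · subst hj
      simp [hp.symm]
    · have h1 : T.part x ≠ j := fun hc => hj hc.symm
      have h2 : T.part y ≠ j := hp ▸ h1
      have := h j (fun hc => hj hc)
      constructor
      · intro hc; exact ⟨h2, this.1 hc.2⟩
      · intro hc; exact ⟨h1, this.2 hc.2⟩

noncomputable def Fmap (r : Fin k → V) (x : V) : Fin k × (Fin k → Bool) :=
  (T.part x, pat T r x)

lemma canSim_iff (r : Fin k → V) (hr : ∀ j, T.part (r j) = j) (x y : V) :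
    canSim T x y ↔ Fmap T r x = Fmap T r y := by
  rw [Fmap, Fmap, Prod.mk.injEq]
  constructor
  · rintro ⟨hp, hw⟩
    refine ⟨hp, (pat_eq_iff T r hp).2 fun j hj => ?_⟩
    exact hw (r j) (by rw [hr j]; exact hj)
  · rintro ⟨hp, hq⟩
    refine ⟨hp, fun w hw => ?_⟩
    have hiff := (pat_eq_iff T r hp).1 hq (T.part w) hw
    exact transfer_one T hp (by rw [hr]) (by rw [hr]; exact hw) hiff

end

lemma card_fiber (k : ℕ) (i : Fin k) :
    Nat.card {g : Fin k → Bool // g i = false} = 2 ^ (k - 1) := by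
  have e : {g : Fin k → Bool // g i = false} ≃ ({j : Fin k // j ≠ i} → Bool) :=
    { toFun := fun g j => g.1 j.1
      invFun := fun h => ⟨fun j => if hj : j = i then false else h ⟨j, hj⟩, by simp⟩
      left_inv := fun g => by
        ext j
        by_cases hj : j = i
        · subst hj; simp [g.2]
        · simp [hj]
      right_inv := fun h => by
        funext j
        simp [j.2] }
  rw [Nat.card_congr e, Nat.card_fun]
  have h1 : Nat.card Bool = 2 := by simp [Nat.card_eq_fintype_card]
  have h2 : Nat.card {j : Fin k // j ≠ i} = k - 1 := by
    rw [Nat.card_eq_fintype_card]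
    have := Set.card_ne_eq i (α := Fin k)
    simp [Set.card_ne_eq]
  rw [h1, h2]

lemma card_S (k : ℕ) :
    Nat.card {p : Fin k × (Fin k → Bool) // p.2 p.1 = false} = k * 2 ^ (k - 1) := by
  rw [Nat.card_congr (Equiv.subtypeProdEquivSigmaSubtype
    fun (i : Fin k) (g : Fin k → Bool) => g i = false)]
  rw [Nat.card_eq_fintype_card, Fintype.card_sigma]
  have : ∀ i : Fin k, Fintype.card {g : Fin k → Bool // g i = false} = 2 ^ (k - 1) := by
    intro i
    rw [← Nat.card_eq_fintype_card, card_fiber]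
  simp [this, Finset.sum_const, Finset.card_univ]

lemma card_image_eq {α β γ : Type*} (D : Set α) (f : α → β) (g : α → γ)
    (h : ∀ x ∈ D, ∀ y ∈ D, f x = f y ↔ g x = g y) :
    Nat.card (f '' D) = Nat.card (g '' D) := by
  have hmem : ∀ b : ↥(f '' D), ∃ x, x ∈ D ∧ f x = b := fun b => b.2
  refine Nat.card_eq_of_bijective
    (fun b => ⟨g (hmem b).choose, ⟨(hmem b).choose, (hmem b).choose_spec.1, rfl⟩⟩) ⟨?_, ?_⟩
  · intro b1 b2 hb
    have h1 := (hmem b1).choose_spec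
    have h2 := (hmem b2).choose_spec
    have : g (hmem b1).choose = g (hmem b2).choose := congrArg Subtype.val hb
    have := (h _ h1.1 _ h2.1).2 this
    exact Subtype.ext (h1.2 ▸ h2.2 ▸ this)
  · rintro ⟨c, y, hy, rfl⟩
    refine ⟨⟨f y, ⟨y, hy, rfl⟩⟩, ?_⟩
    have hsp := (hmem ⟨f y, ⟨y, hy, rfl⟩⟩).choose_spec
    exact Subtype.ext ((h _ hsp.1 _ hy).1 hsp.2)

theorem stmt11 {V : Type*} [Finite V] (k : ℕ) (T : Semigeneric V (Fin k))
    (hsurj : Function.Surjective T.part)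
    (s : Setoid V) (hs : ∀ x y, s.r x y ↔ canSim T x y) :
    Nat.card (Quotient s) = k * 2 ^ (k - 1) ↔
      ∀ (i : Fin k) (v : Fin k → V), (∀ j, j ≠ i → T.part (v j) = j) →
        ∀ f : Fin k → Bool, ∃ w, T.part w = i ∧
          ∀ j, j ≠ i → (T.E w (v j) ↔ f j = false) := by
  classical
  obtain ⟨r, hr⟩ : ∃ r : Fin k → V, ∀ j, T.part (r j) = j :=
    ⟨fun j => (hsurj j).choose, fun j => (hsurj j).choose_spec⟩
  have hsker : s = Setoid.ker (Fmap T r) :=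
    Setoid.ext fun x y => (hs x y).trans (canSim_iff T r hr x y)
  have hq : Nat.card (Quotient s) = Nat.card (Set.range (Fmap T r)) := by
    rw [hsker]; exact Nat.card_congr (Setoid.quotientKerEquivRange _)
  set S : Set (Fin k × (Fin k → Bool)) := {p | p.2 p.1 = false} with hSdef
  have hsub : Set.range (Fmap T r) ⊆ S := by
    rintro _ ⟨x, rfl⟩
    show (Fmap T r x).2 (Fmap T r x).1 = false
    exact pat_self T r x
  have hcardS : Nat.card ↥S = k * 2 ^ (k - 1) := card_S k
  rw [hq]
  constructor
  · intro hcard i v hv f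
    have hrange : Set.range (Fmap T r) = S := by
      refine Set.eq_of_subset_of_ncard_le hsub ?_ (Set.toFinite _)
      rw [← Nat.card_coe_set_eq, ← Nat.card_coe_set_eq, hcard, hcardS]
    set D : Set V := {x | T.part x = i} with hDdef
    set pv : V → (Fin k → Bool) :=
      fun x j => @decide (j ≠ i ∧ T.E x (v j)) (Classical.propDecidable _) with hpvdef
    have key : ∀ x ∈ D, ∀ y ∈ D, pat T r x = pat T r y ↔ pv x = pv y := by
      intro x hx y hy
      have hp : T.part x = T.part y := by rw [hx, hy]
      rw [pat_eq_iff T r hp]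
      constructor
      · intro h
        funext j
        rw [hpvdef]
        simp only []
        rw [decide_eq_decide]
        by_cases hj : j = i
        · simp [hj]
        · have hji : (j : Fin k) ≠ i := hj
          have h1 := h j (by rw [hx]; exact hji)
          have h2 : T.E x (v j) ↔ T.E y (v j) :=
            transfer_one T hp (by rw [hr, hv j hji]) (by rw [hr, hx]; exact hji) h1
          constructor
          · intro hc; exact ⟨hji, h2.1 hc.2⟩
          · intro hc; exact ⟨hji, h2.2 hc.2⟩
      · intro h j hj
        have hji : (j : Fin k) ≠ i := by rw [← hx]; exact hj
        have := congrFun h j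
        rw [hpvdef] at this
        simp only [] at this
        rw [decide_eq_decide] at this
        have h2 : T.E x (v j) ↔ T.E y (v j) := by
          constructor
          · intro he; exact (this.1 ⟨hji, he⟩).2
          · intro he; exact (this.2 ⟨hji, he⟩).2
        exact transfer_one T hp (by rw [hv j hji, hr]) (by rw [hv j hji, hx]; exact hji) h2
    have himg : pat T r '' D = {g : Fin k → Bool | g i = false} := by
      ext g
      constructor
      · rintro ⟨x, hx, rfl⟩
        show pat T r x i = false
        rw [← hx]; exact pat_self T r x
      · intro hg
        have hmem : (i, g) ∈ S := hg
        rw [← hrange] at hmem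
        obtain ⟨x, hx⟩ := hmem
        exact ⟨x, congrArg Prod.fst hx, congrArg Prod.snd hx⟩
    have himg2 : pv '' D = {g : Fin k → Bool | g i = false} := by
      refine Set.eq_of_subset_of_ncard_le ?_ ?_ (Set.toFinite _)
      · rintro _ ⟨x, hx, rfl⟩
        show pv x i = false
        simp [hpvdef]
      · have hc := card_image_eq D (pat T r) pv key
        rw [← Nat.card_coe_set_eq, ← Nat.card_coe_set_eq, ← hc, ← himg]
    have hginD : (fun j => if j = i then false else !(f j)) ∈ pv '' D := by
      rw [himg2]; simp
    obtain ⟨w, hwD, hww⟩ := hginD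
    refine ⟨w, hwD, fun j hj => ?_⟩
    have h0 := congrFun hww j
    simp only [hpvdef, if_neg hj] at h0
    constructor
    · intro he
      cases hf : f j
      · rfl
      · exfalso
        rw [hf, Bool.not_true] at h0
        exact @of_decide_eq_false _ (Classical.propDecidable _) h0 ⟨hj, he⟩
    · intro hf
      rw [hf, Bool.not_false] at h0
      exact (@of_decide_eq_true _ (Classical.propDecidable _) h0).2
  · intro hb
    have hrange : Set.range (Fmap T r) = S := by
      refine Set.Subset.antisymm hsub ?_
      rintro ⟨i, g⟩ hg
      obtain ⟨w, hw, hwp⟩ := hb i r (fun j _ => hr j) (fun j => !(g j))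
      refine ⟨w, ?_⟩
      rw [Fmap, Prod.mk.injEq]
      refine ⟨hw, funext fun j => ?_⟩
      have hgi : g i = false := hg
      by_cases hj : j = i
      · subst hj
        rw [← hw, pat_self, hw]
        exact hgi.symm
      · have hji : (j : Fin k) ≠ i := hj
        have hiff := hwp j hji
        have hpw : T.part w ≠ j := by rw [hw]; exact fun hc => hj hc.symm
        show @decide (T.part w ≠ j ∧ T.E w (r j)) (Classical.propDecidable _) = g j
        cases hgj : g j
        · have hne : ¬ T.E w (r j) := fun he => by
            have h1 := hiff.1 he
            rw [hgj] at h1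
            simp at h1
          exact @decide_eq_false _ (Classical.propDecidable _) fun hc => hne hc.2
        · have hE : T.E w (r j) := hiff.2 (by rw [hgj]; rfl)
          exact @decide_eq_true _ (Classical.propDecidable _) ⟨hpw, hE⟩
    rw [hrange]
    exact hcardS
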